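/- If A is an n×n integer matrix with det(A) = d ≠ 0, then for every point z in (ℂ*)^n, the fiber Φ_A^{-1}(z) of the associated monomial map has exactly |d| elements. -/

import Mathlib

open Complex Matrix

noncomputable section

namespace MonomialMapAux

/-- `exp (2πi t)` as a unit of `ℂ`. -/
def E (t : ℂ) : ℂˣ := Units.mk0 (Complex.exp (2 * Real.pi * Complex.I * t)) (Complex.exp_ne_zero _)

lemma E_val (t : ℂ) : (E t : ℂ) = Complex.exp (2 * Real.pi * Complex.I * t) := rfl

lemma twoPiI_ne_zero : (2 * (Real.pi : ℂ) * Complex.I) ≠ 0 :=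
  mul_ne_zero (mul_ne_zero two_ne_zero (Complex.ofReal_ne_zero.mpr Real.pi_ne_zero))
    Complex.I_ne_zero

lemma E_add (s t : ℂ) : E (s + t) = E s * E t := by
  ext
  simp [E, mul_add, Complex.exp_add]

lemma E_zero : E 0 = 1 := by
  ext; simp [E]

lemma E_sum {ι : Type*} (s : Finset ι) (g : ι → ℂ) :
    E (∑ i ∈ s, g i) = ∏ i ∈ s, E (g i) := by
  classical
  induction s using Finset.induction_on with
  | empty => simpa using E_zero
  | insert _ _ h ih => rw [Finset.sum_insert h, Finset.prod_insert h, E_add, ih]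

lemma E_zpow (t : ℂ) (k : ℤ) : E t ^ k = E (k * t) := by
  ext
  push_cast [E_val]
  rw [← Complex.exp_int_mul]
  congr 1
  ring

lemma E_eq_one_iff {t : ℂ} : E t = 1 ↔ ∃ k : ℤ, t = (k : ℂ) := by
  constructor
  · intro h
    have h1 : Complex.exp (2 * Real.pi * Complex.I * t) = 1 := by
      have := congrArg (Units.val) h
      simpa [E_val] using this
    rw [Complex.exp_eq_one_iff] at h1
    obtain ⟨k, hk⟩ := h1
    refine ⟨k, ?_⟩
    apply mul_left_cancel₀ twoPiI_ne_zero
    rw [hk]; ring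
  · rintro ⟨k, rfl⟩
    ext
    rw [E_val]
    have : 2 * (Real.pi : ℂ) * Complex.I * (k : ℂ) = (k : ℤ) * (2 * Real.pi * Complex.I) := by
      ring
    rw [this, Complex.exp_int_mul_two_pi_mul_I]
    rfl

lemma E_intCast (k : ℤ) : E (k : ℂ) = 1 := E_eq_one_iff.mpr ⟨k, rfl⟩

lemma E_eq_iff {s t : ℂ} : E s = E t ↔ ∃ k : ℤ, s - t = (k : ℂ) := by
  have hs : E s = E t * E (s - t) := by
    rw [← E_add]; congr 1; ring
  constructor
  · intro h
    rw [h] at hs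
    exact E_eq_one_iff.mp (left_eq_mul.mp hs)
  · intro hk
    rw [hs, E_eq_one_iff.mpr hk, mul_one]

lemma E_surjective : Function.Surjective E := by
  intro u
  have hu : (u : ℂ) ∈ Set.range Complex.exp := by
    rw [Complex.range_exp]
    exact u.ne_zero
  obtain ⟨w, hw⟩ := hu
  refine ⟨w / (2 * Real.pi * Complex.I), ?_⟩
  ext
  rw [E_val]
  rw [mul_div_assoc', mul_div_cancel_left₀ _ twoPiI_ne_zero]
  exact hw

end MonomialMapAux

end

/-- The monomial map on the torus `(ℂ*)^n` associated to an integer matrix `A`. -/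
def monomialMap {n : ℕ} (A : Matrix (Fin n) (Fin n) ℤ) (x : Fin n → ℂˣ) : Fin n → ℂˣ :=
  fun i => ∏ j, (x j) ^ (A i j)

noncomputable section

namespace MonomialMapAux

variable {n : ℕ}

lemma monomialMap_mul (A : Matrix (Fin n) (Fin n) ℤ) (x y : Fin n → ℂˣ) :
    monomialMap A (x * y) = monomialMap A x * monomialMap A y := by
  funext i
  simp [monomialMap, mul_zpow, Finset.prod_mul_distrib]

lemma monomialMap_inv (A : Matrix (Fin n) (Fin n) ℤ) (x : Fin n → ℂˣ) :
    monomialMap A x⁻¹ = (monomialMap A x)⁻¹ := by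
  funext i
  simp [monomialMap, _root_.inv_zpow]

lemma monomialMap_E (A : Matrix (Fin n) (Fin n) ℤ) (t : Fin n → ℂ) :
    monomialMap A (fun j => E (t j)) =
      fun i => E ((A.map (Int.cast : ℤ → ℂ) *ᵥ t) i) := by
  funext i
  have : (A.map (Int.cast : ℤ → ℂ) *ᵥ t) i = ∑ j, ((A i j : ℤ) : ℂ) * t j := by
    simp [Matrix.mulVec, dotProduct, Matrix.map_apply]
  rw [this, E_sum]
  simp only [monomialMap]
  exact Finset.prod_congr rfl fun j _ => E_zpow (t j) (A i j)

lemma castVec_mulVec (A : Matrix (Fin n) (Fin n) ℤ) (u : Fin n → ℤ) :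
    (fun i => ((A *ᵥ u) i : ℂ)) = A.map (Int.cast : ℤ → ℂ) *ᵥ (fun i => ((u i : ℤ) : ℂ)) := by
  funext i
  simp [Matrix.mulVec, dotProduct, Matrix.map_apply]

lemma toLin'_injective (A : Matrix (Fin n) (Fin n) ℤ) (hA : A.det ≠ 0) :
    Function.Injective (Matrix.toLin' A) := by
  intro x y hxy
  simp only [Matrix.toLin'_apply] at hxy
  have h0 : A *ᵥ (x - y) = 0 := by rw [Matrix.mulVec_sub, hxy, sub_self]
  have h1 : A.det • (x - y) = 0 := by
    have := congrArg (fun v => A.adjugate *ᵥ v) h0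
    simpa [Matrix.mulVec_mulVec, Matrix.adjugate_mul, Matrix.smul_mulVec,
      Matrix.one_mulVec] using this
  have := smul_eq_zero.mp h1
  rcases this with h | h
  · exact absurd h hA
  · exact sub_eq_zero.mp h

/-- The index of the image lattice equals `|det A|`. -/
lemma index_range_toLin' (A : Matrix (Fin n) (Fin n) ℤ) (hA : A.det ≠ 0) :
    (LinearMap.range (Matrix.toLin' A : (Fin n → ℤ) →ₗ[ℤ] (Fin n → ℤ))).toAddSubgroup.index =
      A.det.natAbs := by
  classical
  have hinj := toLin'_injective A hA
  set N : Submodule ℤ (Fin n → ℤ) :=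
    LinearMap.range (Matrix.toLin' A : (Fin n → ℤ) →ₗ[ℤ] (Fin n → ℤ)) with hN
  obtain ⟨m, snf⟩ := N.smithNormalForm (Pi.basisFun ℤ (Fin n))
  have e : N ≃ₗ[ℤ] (Fin n → ℤ) :=
    (LinearEquiv.ofInjective (Matrix.toLin' A) hinj).symm
  have hm : m = n := by
    have hc := card_eq_of_linearEquiv ℤ (snf.bN.equivFun.symm.trans e)
    simpa using hc
  subst hm
  -- index = ∏ |a i|
  have hindex : N.toAddSubgroup.index = ∏ i, (snf.a i).natAbs := by
    rw [snf.toAddSubgroup_index_eq_pow_mul_prod]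
    simp [Ideal.span_singleton_toAddSubgroup_eq_zmultiples, Int.index_zmultiples]
  -- determinant computation
  let σ : Fin m ≃ Fin m := Equiv.ofBijective snf.f
    ((Fintype.bijective_iff_injective_and_card snf.f).mpr ⟨snf.f.injective, rfl⟩)
  have hσ : ∀ i, snf.f (σ.symm i) = i := fun i => σ.apply_symm_apply i
  let g : (Fin m → ℤ) →ₗ[ℤ] (Fin m → ℤ) :=
    N.subtype ∘ₗ (snf.bM.equiv snf.bN σ.symm : (Fin m → ℤ) →ₗ[ℤ] N)
  have hg : ∀ i, g (snf.bM i) = snf.a (σ.symm i) • snf.bM i := by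
    intro i
    have : g (snf.bM i) = (snf.bN (σ.symm i) : Fin m → ℤ) := by
      simp [g, Module.Basis.equiv_apply]
    rw [this, snf.snf (σ.symm i), hσ]
  have hdetg : (LinearMap.det g).natAbs = ∏ i, (snf.a i).natAbs := by
    have hmat : LinearMap.toMatrix snf.bM snf.bM g = Matrix.diagonal (snf.a ∘ σ.symm) := by
      ext i j
      rw [LinearMap.toMatrix_apply, hg, LinearEquiv.map_smul, Module.Basis.repr_self, Finsupp.smul_single,
        smul_eq_mul, mul_one]
      by_cases h : i = j
      · rw [h, Matrix.diagonal_apply_eq, Finsupp.single_eq_same]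
        rfl
      · rw [Matrix.diagonal_apply_ne _ h, Finsupp.single_eq_of_ne h]
    rw [← LinearMap.det_toMatrix snf.bM, hmat, Matrix.det_diagonal]
    rw [Int.natAbs_eq_iff_associated.mpr (Associated.refl _)]
    calc (∏ i, (snf.a ∘ σ.symm) i).natAbs = ∏ i, ((snf.a ∘ σ.symm) i).natAbs :=
          map_prod Int.natAbsHom _ Finset.univ
      _ = ∏ i, (snf.a i).natAbs := Fintype.prod_equiv σ.symm _ _ fun i => rfl
  have hassoc : Associated (LinearMap.det (Matrix.toLin' A : (Fin m → ℤ) →ₗ[ℤ] (Fin m → ℤ)))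
      (LinearMap.det g) := by
    have h1 : (Matrix.toLin' A : (Fin m → ℤ) →ₗ[ℤ] (Fin m → ℤ)) =
        N.subtype ∘ₗ ((LinearEquiv.ofInjective (Matrix.toLin' A) hinj :
          (Fin m → ℤ) ≃ₗ[ℤ] N) : (Fin m → ℤ) →ₗ[ℤ] N) := by
      ext x
      rfl
    rw [h1]
    exact LinearMap.associated_det_comp_equiv N.subtype _ _
  have hdetA : (LinearMap.det (Matrix.toLin' A : (Fin m → ℤ) →ₗ[ℤ] (Fin m → ℤ))) = A.det :=
    LinearMap.det_toLin' A
  rw [hindex, ← hdetg, ← Int.natAbs_eq_iff_associated.mpr hassoc, hdetA]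

end MonomialMapAux

end

open MonomialMapAux

theorem monomialMap_fiber_card {n : ℕ} (A : Matrix (Fin n) (Fin n) ℤ) (d : ℤ)
    (hd : A.det = d) (hd0 : d ≠ 0) (z : Fin n → ℂˣ) :
    Nat.card {x : Fin n → ℂˣ // monomialMap A x = z} = d.natAbs := by
  classical
  subst hd
  set B : Matrix (Fin n) (Fin n) ℂ := A.map (Int.cast : ℤ → ℂ) with hB
  have hBdet : IsUnit B.det := by
    have : B.det = ((A.det : ℤ) : ℂ) := ((Int.castRingHom ℂ).map_det A).symm
    rw [isUnit_iff_ne_zero, this]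
    exact_mod_cast hd0
  have hBB : ∀ v : Fin n → ℂ, B *ᵥ (B⁻¹ *ᵥ v) = v := by
    intro v
    rw [Matrix.mulVec_mulVec, Matrix.mul_nonsing_inv _ hBdet, Matrix.one_mulVec]
  have hB'B : ∀ v : Fin n → ℂ, B⁻¹ *ᵥ (B *ᵥ v) = v := by
    intro v
    rw [Matrix.mulVec_mulVec, Matrix.nonsing_inv_mul _ hBdet, Matrix.one_mulVec]
  set N : Submodule ℤ (Fin n → ℤ) :=
    LinearMap.range (Matrix.toLin' A : (Fin n → ℤ) →ₗ[ℤ] (Fin n → ℤ)) with hN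
  -- a preimage of `z`
  have hc : ∃ c : Fin n → ℂ, ∀ i, E (c i) = z i := by
    refine ⟨fun i => Classical.choose (E_surjective (z i)), fun i =>
      Classical.choose_spec (E_surjective (z i))⟩
  obtain ⟨c, hc⟩ := hc
  set x0 : Fin n → ℂˣ := fun j => E ((B⁻¹ *ᵥ c) j) with hx0def
  have hx0 : monomialMap A x0 = z := by
    rw [hx0def, monomialMap_E]
    funext i
    rw [hBB, hc]
  -- the fiber is in bijection with the kernel
  let F := {x : Fin n → ℂˣ // monomialMap A x = z}
  let K := {x : Fin n → ℂˣ // monomialMap A x = 1}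
  have eFK : F ≃ K := by
    refine ⟨fun x => ⟨x.1 * x0⁻¹, ?_⟩, fun y => ⟨y.1 * x0, ?_⟩, ?_, ?_⟩
    · rw [monomialMap_mul, monomialMap_inv, x.2, hx0, mul_inv_cancel]
    · rw [monomialMap_mul, y.2, hx0, one_mul]
    · intro x; ext1; simp [mul_assoc]
    · intro y; ext1; simp [mul_assoc]
  -- the kernel is in bijection with `ℤ^n ⧸ A ℤ^n`
  let Ψ : (Fin n → ℤ) → K := fun v =>
    ⟨fun j => E ((B⁻¹ *ᵥ fun i => ((v i : ℤ) : ℂ)) j), by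
      rw [monomialMap_E]
      funext i
      rw [hBB]
      exact E_intCast (v i)⟩
  have keyΨ : ∀ v w : Fin n → ℤ, Ψ v = Ψ w ↔ v - w ∈ N := by
    intro v w
    constructor
    · intro h
      have h' : ∀ j, E ((B⁻¹ *ᵥ fun i => ((v i : ℤ) : ℂ)) j) =
          E ((B⁻¹ *ᵥ fun i => ((w i : ℤ) : ℂ)) j) := by
        intro j
        exact congrFun (congrArg (fun (x : K) => (x.1 : Fin n → ℂˣ)) h) j
      have h2 : ∀ j, ∃ k : ℤ,
          (B⁻¹ *ᵥ fun i => ((v i : ℤ) : ℂ)) j - (B⁻¹ *ᵥ fun i => ((w i : ℤ) : ℂ)) j = k :=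
        fun j => E_eq_iff.mp (h' j)
      choose k hk using h2
      have h3 : (B⁻¹ *ᵥ fun i => ((v i - w i : ℤ) : ℂ)) = fun j => ((k j : ℤ) : ℂ) := by
        funext j
        have : (fun i => ((v i - w i : ℤ) : ℂ)) =
            (fun i => ((v i : ℤ) : ℂ)) - (fun i => ((w i : ℤ) : ℂ)) := by
          funext i; simp only [Pi.sub_apply]; push_cast; ring
        rw [this, Matrix.mulVec_sub]
        exact hk j
      have h4 : (fun i => ((v i - w i : ℤ) : ℂ)) = B *ᵥ fun j => ((k j : ℤ) : ℂ) := by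
        rw [← h3, hBB]
      have h5 : (fun i => (((v - w) i : ℤ) : ℂ)) = fun i => (((A *ᵥ k) i : ℤ) : ℂ) := by
        rw [castVec_mulVec, ← hB]
        simpa using h4
      have h6 : v - w = A *ᵥ k := by
        funext i
        exact_mod_cast congrFun h5 i
      exact ⟨k, by rw [Matrix.toLin'_apply, ← h6]⟩
    · rintro ⟨u, hu⟩
      rw [Matrix.toLin'_apply] at hu
      have h4 : (fun i => ((v i : ℤ) : ℂ)) - (fun i => ((w i : ℤ) : ℂ)) =
          B *ᵥ fun j => ((u j : ℤ) : ℂ) := by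
        rw [← castVec_mulVec, hu]
        funext i
        push_cast [Pi.sub_apply]
        ring
      apply Subtype.ext
      funext j
      apply E_eq_iff.mpr
      refine ⟨u j, ?_⟩
      have : (B⁻¹ *ᵥ fun i => ((v i : ℤ) : ℂ)) - (B⁻¹ *ᵥ fun i => ((w i : ℤ) : ℂ)) =
          fun j => ((u j : ℤ) : ℂ) := by
        rw [← Matrix.mulVec_sub, h4, hB'B]
      exact congrFun this j
  -- build the equiv from the quotient
  let toK : ((Fin n → ℤ) ⧸ N.toAddSubgroup) → K := fun q =>
    Quotient.liftOn' q Ψ (by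
      intro v w hvw
      have hmem : -v + w ∈ N.toAddSubgroup := QuotientAddGroup.leftRel_apply.mp hvw
      have : v - w ∈ N := by
        have := N.toAddSubgroup.neg_mem hmem
        simpa [neg_add_rev, sub_eq_add_neg, add_comm] using this
      exact (keyΨ v w).mpr this)
  have htoK : Function.Bijective toK := by
    constructor
    · intro q1 q2
      refine Quotient.inductionOn₂' q1 q2 ?_
      intro v w h
      have : v - w ∈ N := (keyΨ v w).mp h
      apply Quotient.sound'
      rw [QuotientAddGroup.leftRel_apply]
      have := N.toAddSubgroup.neg_mem ((Submodule.mem_toAddSubgroup N).mpr this)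
      simpa [sub_eq_add_neg, add_comm] using this
    · intro x
      obtain ⟨t, ht⟩ : ∃ t : Fin n → ℂ, ∀ j, E (t j) = x.1 j := by
        refine ⟨fun j => Classical.choose (E_surjective (x.1 j)), fun j =>
          Classical.choose_spec (E_surjective (x.1 j))⟩
      have hx1 : monomialMap A (fun j => E (t j)) = 1 := by
        have : (fun j => E (t j)) = x.1 := funext ht
        rw [this, x.2]
      rw [monomialMap_E] at hx1
      have h2 : ∀ i, ∃ k : ℤ, (B *ᵥ t) i = k := by
        intro i
        have := congrFun hx1 i
        exact E_eq_one_iff.mp this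
      choose v hv using h2
      refine ⟨Quotient.mk'' v, ?_⟩
      have hBv : (fun i => ((v i : ℤ) : ℂ)) = B *ᵥ t := by
        funext i; exact (hv i).symm
      have : toK (Quotient.mk'' v) = Ψ v := rfl
      rw [this]
      apply Subtype.ext
      funext j
      show E ((B⁻¹ *ᵥ fun i => ((v i : ℤ) : ℂ)) j) = x.1 j
      rw [hBv, hB'B, ht]
  -- put everything together
  calc Nat.card F = Nat.card ((Fin n → ℤ) ⧸ N.toAddSubgroup) := by
        rw [Nat.card_congr (eFK.trans (Equiv.ofBijective toK htoK).symm)]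
    _ = N.toAddSubgroup.index := rfl
    _ = A.det.natAbs := index_range_toLin' A hd0
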